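/- Fix n ≥ 1, r ≥ 0 and 2 ≤ k ≤ n. If (x₁² + ... + xₙ²)ʳ · [(x₁ + ... + xₙ)² + (a−1)(x₁² + ... + xₙ²)] is a sum of squares of k-nomials, then a ≥ (n−1)/(k−1); consequently (x₁ + ... + xₙ)² + (a−1)(x₁² + ... + xₙ²) is itself a sum of squares of k-nomials. -/

import Mathlib

open Matrix

/-- `A` has factor width at most `k`: `A = V * Vᵀ` where every column of `V`
has at most `k` nonzero entries. -/
def HasFactorWidthLE {ι : Type*} [Fintype ι] (A : Matrix ι ι ℝ) (k : ℕ) : Prop :=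
  ∃ (m : ℕ) (V : Matrix ι (Fin m) ℝ),
    A = V * Vᵀ ∧ ∀ j, {i | V i j ≠ 0}.ncard ≤ k

/-- The cone `FW^n_k` of psd `n × n` matrices of factor width at most `k`. -/
def FW (n k : ℕ) : Set (Matrix (Fin n) (Fin n) ℝ) :=
  {A | A.PosSemidef ∧ HasFactorWidthLE A k}

/-- The principal submatrix of `A` indexed by the finite set `K`. -/
def principalSub {ι : Type*} (A : Matrix ι ι ℝ) (K : Finset ι) :
    Matrix K K ℝ :=
  A.submatrix (fun i => (i : ι)) (fun j => (j : ι))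

/-- The cone `(FW^n_k)^*`: symmetric matrices all of whose `k × k` principal
submatrices are psd. -/
def FWdual (n k : ℕ) : Set (Matrix (Fin n) (Fin n) ℝ) :=
  {A | A.IsSymm ∧ ∀ K : Finset (Fin n), K.card = k → (principalSub A K).PosSemidef}

/-- The dual cone (within symmetric matrices) with respect to the trace inner
product `⟨Y, X⟩ = trace (Y * Xᵀ)`. -/
def dualSet {n : ℕ} (C : Set (Matrix (Fin n) (Fin n) ℝ)) :
    Set (Matrix (Fin n) (Fin n) ℝ) :=
  {Y | Y.IsSymm ∧ ∀ X ∈ C, 0 ≤ (Y * Xᵀ).trace}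

/-- `A` spans an extreme ray of the cone `C`. -/
def SpansExtremeRay {E : Type*} [AddCommMonoid E] [Module ℝ E]
    (C : Set E) (A : E) : Prop :=
  A ∈ C ∧ A ≠ 0 ∧ ∀ X Y, X ∈ C → Y ∈ C → A = X + Y →
    ∃ a b : ℝ, 0 ≤ a ∧ 0 ≤ b ∧ X = a • A ∧ Y = b • A

/-- `p` is a sum of squares of `k`-nomials (polynomials with at most `k` monomials). -/
def IsSOkS {n : ℕ} (k : ℕ) (p : MvPolynomial (Fin n) ℝ) : Prop :=
  ∃ (m : ℕ) (q : Fin m → MvPolynomial (Fin n) ℝ),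
    (∀ i, (q i).support.card ≤ k) ∧ p = ∑ i, (q i) ^ 2

namespace Stmt14Aux

open MvPolynomial Finset

noncomputable def w (n k : ℕ) (α : Fin n →₀ ℕ) : ℝ :=
  if ∀ i, Even (α i) then (k : ℝ) - 1 else -1

noncomputable def L (n k : ℕ) (p : MvPolynomial (Fin n) ℝ) : ℝ :=
  ∑ α ∈ p.support, p.coeff α * w n k α

lemma L_eq_sum_subset {n k : ℕ} (p : MvPolynomial (Fin n) ℝ) {s : Finset (Fin n →₀ ℕ)}
    (hs : p.support ⊆ s) : L n k p = ∑ α ∈ s, p.coeff α * w n k α :=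
  Finset.sum_subset hs (fun x _ hx => by
    rw [MvPolynomial.notMem_support_iff.mp hx, zero_mul])

lemma L_zero {n k : ℕ} : L n k 0 = 0 := by simp [L]

lemma L_add {n k : ℕ} (p q : MvPolynomial (Fin n) ℝ) :
    L n k (p + q) = L n k p + L n k q := by
  classical
  rw [L_eq_sum_subset (p + q) (Finset.Subset.trans (MvPolynomial.support_add)
      (Finset.Subset.refl _)),
    L_eq_sum_subset p (Finset.subset_union_left (s₂ := q.support)),
    L_eq_sum_subset q (Finset.subset_union_right (s₁ := p.support)),
    ← Finset.sum_add_distrib]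
  exact Finset.sum_congr rfl fun α _ => by rw [MvPolynomial.coeff_add]; ring

lemma L_monomial {n k : ℕ} (α : Fin n →₀ ℕ) (c : ℝ) :
    L n k (monomial α c) = c * w n k α := by
  classical
  rcases eq_or_ne c 0 with rfl | hc
  · simp [L]
  · rw [L, MvPolynomial.support_monomial, if_neg hc, Finset.sum_singleton,
      MvPolynomial.coeff_monomial, if_pos rfl]

lemma L_sum {n k : ℕ} {ι : Type*} (s : Finset ι) (f : ι → MvPolynomial (Fin n) ℝ) :
    L n k (∑ i ∈ s, f i) = ∑ i ∈ s, L n k (f i) := by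
  classical
  induction s using Finset.cons_induction with
  | empty => simp [L_zero]
  | cons i s hi ih => rw [Finset.sum_cons, L_add, ih, Finset.sum_cons]

lemma L_mul {n k : ℕ} (p q : MvPolynomial (Fin n) ℝ) :
    L n k (p * q) = ∑ α ∈ p.support, ∑ β ∈ q.support,
      p.coeff α * q.coeff β * w n k (α + β) := by
  classical
  conv_lhs => rw [← support_sum_monomial_coeff p, ← support_sum_monomial_coeff q,
    Finset.sum_mul_sum]
  rw [L_sum]
  refine Finset.sum_congr rfl fun α _ => ?_
  rw [L_sum]
  exact Finset.sum_congr rfl fun β _ => by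
    rw [MvPolynomial.monomial_mul, L_monomial]

def par {n : ℕ} (α : Fin n →₀ ℕ) : Fin n → ZMod 2 := fun i => (α i : ZMod 2)

lemma w_add {n k : ℕ} (α β : Fin n →₀ ℕ) :
    w n k (α + β) = (if par α = par β then (k : ℝ) else 0) - 1 := by
  have h : (∀ i, Even ((α + β) i)) ↔ par α = par β := by
    simp only [Finsupp.add_apply, funext_iff, par]
    refine forall_congr' fun i => ?_
    rw [Nat.even_add, ZMod.natCast_eq_natCast_iff, Nat.ModEq, Nat.even_iff, Nat.even_iff]
    omega
  rw [w]
  split_ifs with h1 h2 h2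
  · ring
  · exact absurd (h.mp h1) h2
  · exact absurd (h.mpr h2) h1
  · ring

lemma w_even_add {n k : ℕ} (α β : Fin n →₀ ℕ) (hα : ∀ i, Even (α i)) :
    w n k (α + β) = w n k β := by
  unfold w
  have : (∀ i, Even ((α + β) i)) ↔ (∀ i, Even (β i)) := by
    refine forall_congr' fun i => ?_
    simp only [Finsupp.add_apply]
    rw [Nat.even_add]
    exact ⟨fun h => h.mp (hα i), fun h => ⟨fun _ => h, fun _ => hα i⟩⟩
  rw [if_congr this rfl rfl]

lemma L_sq_nonneg {n k : ℕ} (q : MvPolynomial (Fin n) ℝ)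
    (hq : q.support.card ≤ k) : 0 ≤ L n k (q * q) := by
  classical
  set S := q.support with hS
  set I := S.image par with hI
  set s : (Fin n → ZMod 2) → ℝ :=
    fun t => ∑ α ∈ S.filter (fun a => par a = t), q.coeff α with hs
  have fiber : ∀ f : (Fin n →₀ ℕ) → ℝ,
      ∑ α ∈ S, f α = ∑ t ∈ I, ∑ α ∈ S.filter (fun a => par a = t), f α :=
    fun f => (Finset.sum_fiberwise_of_maps_to
      (fun α hα => Finset.mem_image_of_mem par hα) f).symm
  have hL : L n k (q * q)
      = (k : ℝ) * (∑ t ∈ I, s t ^ 2) - (∑ t ∈ I, s t) ^ 2 := by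
    rw [L_mul]
    have step1 : ∀ α ∈ S, ∑ β ∈ S, q.coeff α * q.coeff β * w n k (α + β)
        = (k : ℝ) * (q.coeff α * s (par α)) - q.coeff α * (∑ β ∈ S, q.coeff β) := by
      intro α _
      have : ∀ β ∈ S, q.coeff α * q.coeff β * w n k (α + β)
          = (if par β = par α then (k : ℝ) * (q.coeff α * q.coeff β) else 0)
            - q.coeff α * q.coeff β := by
        intro β _
        rw [w_add]
        by_cases h : par α = par β
        · rw [if_pos h, if_pos h.symm]; ring
        · rw [if_neg h, if_neg (Ne.symm h)]; ring
      rw [Finset.sum_congr rfl this, Finset.sum_sub_distrib, ← Finset.sum_filter]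
      simp only [← Finset.mul_sum]
      rfl
    rw [Finset.sum_congr rfl step1, Finset.sum_sub_distrib]
    have e1 : ∑ α ∈ S, (k : ℝ) * (q.coeff α * s (par α))
        = (k : ℝ) * ∑ t ∈ I, s t ^ 2 := by
      rw [← Finset.mul_sum, fiber (fun α => q.coeff α * s (par α))]
      congr 1
      refine Finset.sum_congr rfl fun t _ => ?_
      have : ∀ α ∈ S.filter (fun a => par a = t),
          q.coeff α * s (par α) = q.coeff α * s t := by
        intro α hα
        rw [(Finset.mem_filter.mp hα).2]
      rw [Finset.sum_congr rfl this, ← Finset.sum_mul, sq]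
    have e2 : ∑ α ∈ S, q.coeff α * (∑ β ∈ S, q.coeff β)
        = (∑ t ∈ I, s t) ^ 2 := by
      rw [← Finset.sum_mul, sq]
      congr 1 <;> exact fiber q.coeff
    rw [e1, e2]
  rw [hL, sub_nonneg]
  calc (∑ t ∈ I, s t) ^ 2 ≤ (I.card : ℝ) * ∑ t ∈ I, s t ^ 2 :=
        sq_sum_le_card_mul_sum_sq
    _ ≤ (k : ℝ) * ∑ t ∈ I, s t ^ 2 := by
        refine mul_le_mul_of_nonneg_right ?_ (Finset.sum_nonneg fun t _ => sq_nonneg _)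
        exact_mod_cast le_trans (Finset.card_image_le) hq

lemma L_mul_even {n k : ℕ} (p p' : MvPolynomial (Fin n) ℝ)
    (hp : ∀ α ∈ p.support, ∀ i, Even (α i)) :
    L n k (p * p') = (∑ α ∈ p.support, p.coeff α) * L n k p' := by
  rw [L_mul, Finset.sum_mul]
  refine Finset.sum_congr rfl fun α hα => ?_
  rw [L, Finset.mul_sum]
  exact Finset.sum_congr rfl fun β _ => by
    rw [w_even_add α β (hp α hα)]; ring

lemma even_support_pow {n r : ℕ} :
    ∀ α ∈ (((∑ i, X i ^ 2 : MvPolynomial (Fin n) ℝ)) ^ r).support, ∀ i, Even (α i) := by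
  classical
  induction r with
  | zero =>
    intro α hα i
    rw [pow_zero] at hα
    rw [← MvPolynomial.C_1, MvPolynomial.C_apply, MvPolynomial.support_monomial,
      if_neg one_ne_zero, Finset.mem_singleton] at hα
    simp [hα]
  | succ r ih =>
    intro α hα i
    rw [pow_succ] at hα
    obtain ⟨β, hβ, γ, hγ, rfl⟩ := Finset.mem_add.mp (MvPolynomial.support_mul _ _ hα)
    have hβe : ∀ i, Even (β i) := ih β hβ
    have hγe : ∀ i, Even (γ i) := by
      intro j
      have := MvPolynomial.support_sum (f := fun i => (X i ^ 2 : MvPolynomial (Fin n) ℝ)) hγ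
      obtain ⟨t, _, ht⟩ := Finset.mem_biUnion.mp this
      simp only [MvPolynomial.X_pow_eq_monomial, MvPolynomial.support_monomial,
        one_ne_zero, if_false, Finset.mem_singleton] at ht
      subst ht
      rw [Finsupp.single_apply]
      split <;> simp
    rw [Finsupp.add_apply]
    exact (hβe i).add (hγe i)

lemma X_eq_monomial {n : ℕ} (i : Fin n) :
    (X i : MvPolynomial (Fin n) ℝ) = monomial (Finsupp.single i 1) 1 := rfl

lemma w_single_two {n k : ℕ} (i : Fin n) : w n k (Finsupp.single i 2) = (k : ℝ) - 1 := by
  rw [w, if_pos]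
  intro t
  rw [Finsupp.single_apply]
  split <;> simp

lemma w_pair {n k : ℕ} (i j : Fin n) :
    w n k (Finsupp.single i 1 + Finsupp.single j 1) = if i = j then (k : ℝ) - 1 else -1 := by
  rcases eq_or_ne i j with rfl | hij
  · rw [if_pos rfl, w, if_pos]
    intro t
    rw [Finsupp.add_apply, Finsupp.single_apply]
    split <;> simp
  · rw [if_neg hij, w, if_neg]
    push_neg
    refine ⟨i, ?_⟩
    rw [Finsupp.add_apply, Finsupp.single_apply, Finsupp.single_apply,
      if_pos rfl, if_neg (Ne.symm hij)]
    simp [Nat.even_iff]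

lemma L_quadratic {n k : ℕ} (a : ℝ) :
    L n k ((∑ i, X i) ^ 2 + C (a - 1) * ∑ i, (X i : MvPolynomial (Fin n) ℝ) ^ 2)
      = (n : ℝ) * (a * ((k : ℝ) - 1) - ((n : ℝ) - 1)) := by
  classical
  rw [L_add]
  have h1 : L n k ((∑ i, X i : MvPolynomial (Fin n) ℝ) ^ 2)
      = (n : ℝ) * ((k : ℝ) - (n : ℝ)) := by
    rw [sq]
    simp only [X_eq_monomial]
    rw [Finset.sum_mul_sum]
    simp only [MvPolynomial.monomial_mul, one_mul]
    rw [L_sum]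
    simp only [L_sum]
    have inner : ∀ i : Fin n,
        ∑ j, L n k (monomial (Finsupp.single i 1 + Finsupp.single j 1) 1)
          = (k : ℝ) - (n : ℝ) := by
      intro i
      have e : ∀ j : Fin n, L n k (monomial (Finsupp.single i 1 + Finsupp.single j 1) 1)
          = (if j = i then (k : ℝ) else 0) - 1 := by
        intro j
        rw [L_monomial, one_mul, w_pair]
        rcases eq_or_ne i j with rfl | hij
        · rw [if_pos rfl, if_pos rfl]
        · rw [if_neg hij, if_neg (Ne.symm hij)]; ring
      rw [Finset.sum_congr rfl fun j _ => e j, Finset.sum_sub_distrib,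
        Finset.sum_ite_eq', if_pos (Finset.mem_univ i), Finset.sum_const,
        Finset.card_univ, Fintype.card_fin, nsmul_eq_mul, mul_one]
    rw [Finset.sum_congr rfl fun i _ => inner i, Finset.sum_const,
      Finset.card_univ, Fintype.card_fin, nsmul_eq_mul]
  have h2 : L n k (C (a - 1) * ∑ i, (X i : MvPolynomial (Fin n) ℝ) ^ 2)
      = (n : ℝ) * ((a - 1) * ((k : ℝ) - 1)) := by
    rw [Finset.mul_sum]
    simp only [MvPolynomial.X_pow_eq_monomial, MvPolynomial.C_mul_monomial, mul_one]
    rw [L_sum]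
    simp only [L_monomial, w_single_two]
    rw [Finset.sum_const, Finset.card_univ, Fintype.card_fin, nsmul_eq_mul]
  rw [h1, h2]; ring

lemma card_filter_superset {ι : Type*} [DecidableEq ι] (s T : Finset ι) (hT : T ⊆ s)
    (k : ℕ) (hk : T.card ≤ k) :
    ((s.powersetCard k).filter (fun S => T ⊆ S)).card
      = (s.card - T.card).choose (k - T.card) := by
  rw [← Finset.card_sdiff_of_subset hT, ← Finset.card_powersetCard (k - T.card) (s \ T)]
  refine Finset.card_bij' (fun S _ => S \ T) (fun U _ => U ∪ T) ?_ ?_ ?_ ?_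
  · intro S hS
    obtain ⟨hS1, hS2⟩ := Finset.mem_filter.mp hS
    obtain ⟨hSs, hSc⟩ := Finset.mem_powersetCard.mp hS1
    exact Finset.mem_powersetCard.mpr
      ⟨Finset.sdiff_subset_sdiff hSs (Finset.Subset.refl T),
       by rw [Finset.card_sdiff_of_subset hS2, hSc]⟩
  · intro U hU
    obtain ⟨hUs, hUc⟩ := Finset.mem_powersetCard.mp hU
    have hdisj : Disjoint U T := Finset.disjoint_of_subset_left hUs Finset.sdiff_disjoint
    refine Finset.mem_filter.mpr ⟨Finset.mem_powersetCard.mpr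
      ⟨Finset.union_subset (hUs.trans (Finset.sdiff_subset)) hT, ?_⟩,
      Finset.subset_union_right⟩
    rw [Finset.card_union_of_disjoint hdisj, hUc]
    omega
  · intro S hS
    exact Finset.sdiff_union_of_subset (Finset.mem_filter.mp hS).2
  · intro U hU
    have hUs := (Finset.mem_powersetCard.mp hU).1
    have hdisj : Disjoint U T := Finset.disjoint_of_subset_left hUs Finset.sdiff_disjoint
    show (U ∪ T) \ T = U
    rw [Finset.union_sdiff_right, Finset.sdiff_eq_self_of_disjoint hdisj]

lemma key_id (n k : ℕ) (hk : 2 ≤ k) :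
    ∑ S ∈ Finset.powersetCard k (Finset.univ : Finset (Fin n)), (∑ i ∈ S, X i) ^ 2
      = C (((n - 2).choose (k - 2) : ℝ)) * (∑ i, X i) ^ 2
        + C ((((n - 1).choose (k - 1) : ℝ)) - ((n - 2).choose (k - 2) : ℝ))
          * ∑ i, (X i : MvPolynomial (Fin n) ℝ) ^ 2 := by
  classical
  set P := Finset.powersetCard k (Finset.univ : Finset (Fin n)) with hP
  set c1 := (n - 1).choose (k - 1) with hc1
  set c2 := (n - 2).choose (k - 2) with hc2
  have hcard : ∀ i j : Fin n,
      (P.filter (fun S => i ∈ S ∧ j ∈ S)).card = if i = j then c1 else c2 := by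
    intro i j
    rcases eq_or_ne i j with rfl | hij
    · rw [if_pos rfl]
      have hpred : ∀ S : Finset (Fin n), (i ∈ S ∧ i ∈ S) ↔ ({i} : Finset (Fin n)) ⊆ S := by
        intro S; simp [Finset.singleton_subset_iff]
      rw [Finset.filter_congr (fun S _ => hpred S)]
      rw [card_filter_superset _ _ (Finset.subset_univ _) k (by simpa using hk.trans' one_le_two)]
      simp [hc1]
    · rw [if_neg hij]
      have hpred : ∀ S : Finset (Fin n), (i ∈ S ∧ j ∈ S) ↔ ({i, j} : Finset (Fin n)) ⊆ S := by
        intro S; simp [Finset.insert_subset_iff, Finset.singleton_subset_iff]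
      rw [Finset.filter_congr (fun S _ => hpred S)]
      have hT2 : ({i, j} : Finset (Fin n)).card = 2 := by
        rw [Finset.card_insert_of_notMem (by simpa using hij), Finset.card_singleton]
      rw [card_filter_superset _ _ (Finset.subset_univ _) k (by rw [hT2]; exact hk)]
      simp [hc2, hT2]
  have step1 : ∑ S ∈ P, (∑ i ∈ S, X i : MvPolynomial (Fin n) ℝ) ^ 2
      = ∑ S ∈ P, ∑ i, ∑ j, (if i ∈ S ∧ j ∈ S then X i * X j else 0) := by
    refine Finset.sum_congr rfl fun S _ => ?_
    rw [sq, Finset.sum_mul_sum]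
    have hinner : ∀ i : Fin n, ∑ j, (if i ∈ S ∧ j ∈ S then (X i : MvPolynomial (Fin n) ℝ) * X j else 0)
        = if i ∈ S then ∑ j ∈ S, X i * X j else 0 := by
      intro i
      by_cases hi : i ∈ S
      · simp only [hi, true_and, if_true]
        rw [Finset.sum_ite_mem, Finset.univ_inter]
      · simp [hi]
    rw [Finset.sum_congr rfl fun i _ => hinner i, Finset.sum_ite_mem, Finset.univ_inter]
  have step2 : ∑ S ∈ P, ∑ i, ∑ j, (if i ∈ S ∧ j ∈ S then X i * X j else 0)
      = ∑ i, ∑ j : Fin n, ((P.filter (fun S => i ∈ S ∧ j ∈ S)).card)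
          • ((X i : MvPolynomial (Fin n) ℝ) * X j) := by
    rw [Finset.sum_comm]
    refine Finset.sum_congr rfl fun i _ => ?_
    rw [Finset.sum_comm]
    refine Finset.sum_congr rfl fun j _ => ?_
    rw [← Finset.sum_filter, Finset.sum_const]
  have smul_eq : ∀ (c : ℕ) (x : MvPolynomial (Fin n) ℝ), c • x = C (c : ℝ) * x := by
    intro c x
    rw [nsmul_eq_mul, ← map_natCast (C : ℝ →+* MvPolynomial (Fin n) ℝ) c]
  rw [step1, step2]
  have step3 : ∀ i j : Fin n,
      ((P.filter (fun S => i ∈ S ∧ j ∈ S)).card) • ((X i : MvPolynomial (Fin n) ℝ) * X j)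
        = C (c2 : ℝ) * (X i * X j)
          + (if i = j then C ((c1 : ℝ) - (c2 : ℝ)) * (X i * X j) else 0) := by
    intro i j
    rw [hcard i j]
    rcases eq_or_ne i j with rfl | hij
    · rw [if_pos rfl, if_pos rfl, smul_eq, ← add_mul, ← map_add]
      norm_num
    · rw [if_neg hij, if_neg hij, smul_eq, add_zero]
  simp only [step3]
  simp only [Finset.sum_add_distrib]
  congr 1
  · rw [sq, Finset.sum_mul_sum, Finset.mul_sum]
    refine Finset.sum_congr rfl fun i _ => ?_
    rw [Finset.mul_sum]
  · rw [Finset.mul_sum]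
    refine Finset.sum_congr rfl fun i _ => ?_
    rw [Finset.sum_ite_eq, if_pos (Finset.mem_univ i), sq]

lemma isSOkS_of_finset {n k : ℕ} {ι : Type*} (s : Finset ι)
    (q : ι → MvPolynomial (Fin n) ℝ)
    (hq : ∀ i ∈ s, (q i).support.card ≤ k) {p : MvPolynomial (Fin n) ℝ}
    (hp : p = ∑ i ∈ s, (q i) ^ 2) : IsSOkS k p := by
  refine ⟨s.card, fun m => q (s.equivFin.symm m), fun m => hq _ (s.equivFin.symm m).2, ?_⟩
  rw [hp, ← Finset.sum_coe_sort s (fun i => q i ^ 2)]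
  exact (Equiv.sum_comp s.equivFin.symm (fun x : {x // x ∈ s} => q (x : ι) ^ 2)).symm

end Stmt14Aux

set_option maxHeartbeats 1000000 in
open MvPolynomial in
/-- if `(∑ xᵢ²)^r ⬝ pₙᵃ` is a sum of squares of `k`-nomials then
`a ≥ (n-1)/(k-1)`, and consequently `pₙᵃ` is itself a sum of squares of `k`-nomials. -/
theorem stmt14 (n k r : ℕ) (hn : 1 ≤ n) (hk : 2 ≤ k) (hkn : k ≤ n) (a : ℝ)
    (h : IsSOkS k ((∑ i, (X i : MvPolynomial (Fin n) ℝ) ^ 2) ^ r *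
        ((∑ i, X i) ^ 2 + C (a - 1) * ∑ i, (X i) ^ 2))) :
    ((n : ℝ) - 1) / ((k : ℝ) - 1) ≤ a ∧
    IsSOkS k ((∑ i, (X i : MvPolynomial (Fin n) ℝ)) ^ 2
        + C (a - 1) * ∑ i, (X i) ^ 2) := by
  classical
  have hn2 : 2 ≤ n := le_trans hk hkn
  have hk1 : (0:ℝ) < (k:ℝ) - 1 := by
    have : (2:ℝ) ≤ (k:ℝ) := by exact_mod_cast hk
    linarith
  obtain ⟨m, qs, hsupp, heq⟩ := h
  have h0 : 0 ≤ Stmt14Aux.L n k ((∑ i, (X i : MvPolynomial (Fin n) ℝ) ^ 2) ^ r *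
      ((∑ i, X i) ^ 2 + C (a - 1) * ∑ i, (X i) ^ 2)) := by
    rw [heq, Stmt14Aux.L_sum]
    refine Finset.sum_nonneg fun i _ => ?_
    rw [pow_two]
    exact Stmt14Aux.L_sq_nonneg _ (hsupp i)
  have hLval : Stmt14Aux.L n k ((∑ i, (X i : MvPolynomial (Fin n) ℝ) ^ 2) ^ r *
      ((∑ i, X i) ^ 2 + C (a - 1) * ∑ i, (X i) ^ 2))
      = (n:ℝ)^r * ((n:ℝ) * (a * ((k:ℝ)-1) - ((n:ℝ)-1))) := by
    rw [Stmt14Aux.L_mul_even _ _ Stmt14Aux.even_support_pow, Stmt14Aux.L_quadratic]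
    congr 1
    have e1 : ∑ α ∈ ((∑ i, (X i : MvPolynomial (Fin n) ℝ)^2)^r).support,
        MvPolynomial.coeff α ((∑ i, (X i : MvPolynomial (Fin n) ℝ)^2)^r)
        = MvPolynomial.eval (fun _ : Fin n => (1:ℝ))
            ((∑ i, (X i : MvPolynomial (Fin n) ℝ)^2)^r) := by
      rw [MvPolynomial.eval_eq]
      exact Finset.sum_congr rfl fun d _ => by simp
    rw [e1]
    simp
  have hineq : 0 ≤ a * ((k:ℝ)-1) - ((n:ℝ)-1) := by
    rw [hLval] at h0
    have hnpos : (0:ℝ) < (n:ℝ) := by exact_mod_cast hn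
    have hrpos : (0:ℝ) < (n:ℝ)^r := by positivity
    by_contra hcon
    push_neg at hcon
    have : (n:ℝ)^r * ((n:ℝ) * (a * ((k:ℝ)-1) - ((n:ℝ)-1))) < 0 :=
      mul_neg_of_pos_of_neg hrpos (mul_neg_of_pos_of_neg hnpos hcon)
    linarith
  have hdiv : ((n:ℝ)-1)/((k:ℝ)-1) ≤ a := by
    rw [div_le_iff₀ hk1]; linarith
  refine ⟨hdiv, ?_⟩
  -- Part 2: explicit SOS decomposition
  set c1 := (n-1).choose (k-1) with hc1
  set c2 := (n-2).choose (k-2) with hc2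
  have hc2pos : 0 < c2 := Nat.choose_pos (by omega)
  have hc2r : (0:ℝ) < (c2:ℝ) := by exact_mod_cast hc2pos
  have hcastn : ((n-1 : ℕ) : ℝ) = (n:ℝ) - 1 := by
    rw [Nat.cast_sub (by omega)]; norm_num
  have hcastk : ((k-1 : ℕ) : ℝ) = (k:ℝ) - 1 := by
    rw [Nat.cast_sub (by omega)]; norm_num
  have hratio : ((n:ℝ)-1) * (c2:ℝ) = (c1:ℝ) * ((k:ℝ)-1) := by
    have hnat : (n-1) * c2 = c1 * (k-1) := by
      have h3 := Nat.add_one_mul_choose_eq (n-2) (k-2)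
      have h1 : n - 2 + 1 = n - 1 := by omega
      have h2 : k - 2 + 1 = k - 1 := by omega
      rw [h1, h2] at h3
      exact h3
    rw [← hcastn, ← hcastk]
    exact_mod_cast hnat
  set μ : ℝ := a - ((n:ℝ)-1)/((k:ℝ)-1) with hμ
  have hμ0 : 0 ≤ μ := by rw [hμ]; linarith
  set b : ℝ := Real.sqrt ((c2:ℝ)⁻¹) with hb
  set mm : ℝ := Real.sqrt μ with hmm
  set P := Finset.powersetCard k (Finset.univ : Finset (Fin n)) with hP
  refine Stmt14Aux.isSOkS_of_finset (P.disjSum Finset.univ)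
    (Sum.elim (fun S => C b * ∑ i ∈ S, X i) (fun i => C mm * X i)) ?_ ?_
  · have hCsub : ∀ (c : ℝ) (p : MvPolynomial (Fin n) ℝ), (C c * p).support ⊆ p.support := by
      intro c p α hα
      rw [MvPolynomial.mem_support_iff, MvPolynomial.coeff_C_mul] at hα
      exact MvPolynomial.mem_support_iff.mpr (right_ne_zero_of_mul hα)
    rintro (S | i) hx
    · rw [Finset.inl_mem_disjSum, hP, Finset.mem_powersetCard] at hx
      calc (Sum.elim (fun S => C b * ∑ i ∈ S, X i)
              (fun i => C mm * (X i : MvPolynomial (Fin n) ℝ)) (Sum.inl S)).support.card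
          = ((C b * ∑ i ∈ S, X i : MvPolynomial (Fin n) ℝ)).support.card := rfl
        _ ≤ ((∑ i ∈ S, X i : MvPolynomial (Fin n) ℝ)).support.card :=
            Finset.card_le_card (hCsub b _)
        _ ≤ (S.biUnion fun i => (X i : MvPolynomial (Fin n) ℝ).support).card :=
            Finset.card_le_card MvPolynomial.support_sum
        _ ≤ ∑ i ∈ S, ((X i : MvPolynomial (Fin n) ℝ).support).card :=
            Finset.card_biUnion_le
        _ = S.card := by
            simp [MvPolynomial.support_X]
        _ = k := hx.2
    · calc (Sum.elim (fun S => C b * ∑ i ∈ S, X i)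
              (fun i => C mm * (X i : MvPolynomial (Fin n) ℝ)) (Sum.inr i)).support.card
          = ((C mm * X i : MvPolynomial (Fin n) ℝ)).support.card := rfl
        _ ≤ ((X i : MvPolynomial (Fin n) ℝ).support).card :=
            Finset.card_le_card (hCsub mm _)
        _ = 1 := by rw [MvPolynomial.support_X]; simp
        _ ≤ k := by omega
  · rw [Finset.sum_disjSum]
    have hS : ∀ S : Finset (Fin n),
        (Sum.elim (fun S => C b * ∑ i ∈ S, X i)
          (fun i => C mm * (X i : MvPolynomial (Fin n) ℝ)) (Sum.inl S)) ^ 2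
        = C ((c2:ℝ)⁻¹) * (∑ i ∈ S, X i) ^ 2 := by
      intro S
      show (C b * ∑ i ∈ S, X i) ^ 2 = _
      rw [mul_pow, ← MvPolynomial.C_pow, hb, Real.sq_sqrt (by positivity)]
    have hi : ∀ i : Fin n,
        (Sum.elim (fun S => C b * ∑ i ∈ S, X i)
          (fun i => C mm * (X i : MvPolynomial (Fin n) ℝ)) (Sum.inr i)) ^ 2
        = C μ * (X i) ^ 2 := by
      intro i
      show (C mm * X i) ^ 2 = _
      rw [mul_pow, ← MvPolynomial.C_pow, hmm, Real.sq_sqrt hμ0]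
    rw [Finset.sum_congr rfl fun S _ => hS S, Finset.sum_congr rfl fun i _ => hi i,
      ← Finset.mul_sum, ← Finset.mul_sum, hP, Stmt14Aux.key_id n k hk]
    have h2 : (c2:ℝ)⁻¹ * ((c1:ℝ)-(c2:ℝ)) + μ = a - 1 := by
      rw [hμ]
      field_simp
      nlinarith [hratio]
    have h1 : (c2:ℝ)⁻¹ * (c2:ℝ) = 1 := inv_mul_cancel₀ (ne_of_gt hc2r)
    rw [mul_add, ← mul_assoc, ← MvPolynomial.C_mul, ← mul_assoc, ← MvPolynomial.C_mul, h1,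
      MvPolynomial.C_1, one_mul, add_assoc, ← add_mul, ← MvPolynomial.C_add, h2]
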